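/- Let p > 3 be prime with p ≡ 2 (mod 3) and c ∈ F_p nonzero. For S_λ = Σ_{x ∈ F_p} σ(x³ + λ x² + c), the variance of (S_λ)_{λ∈F_p} equals p − 2 − 1/p. -/

import Mathlib

open Finset

section Aux
variable {p : ℕ} [Fact p.Prime]

lemma aux_char_ne_two (hp : 3 < p) : ringChar (ZMod p) ≠ 2 := by
  rw [ZMod.ringChar_zmod_n]; omega

lemma aux_sum_reindex_affine (f : ZMod p → ℤ) {a : ZMod p} (ha : a ≠ 0) (b : ZMod p) :
    ∑ l : ZMod p, f (a * l + b) = ∑ l : ZMod p, f l := by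
  refine Fintype.sum_bijective (fun l => a * l + b) ⟨?_, ?_⟩ _ _ (fun l => rfl)
  · intro u v h
    simp only [add_left_inj] at h
    exact mul_left_cancel₀ ha h
  · intro t
    exact ⟨a⁻¹ * (t - b), by field_simp; ring⟩

lemma aux_cube_bij (hp : 3 < p) (hp3 : p % 3 = 2) :
    Function.Bijective (fun x : ZMod p => x ^ 3) := by
  rw [Finite.injective_iff_bijective.symm]
  intro x y h
  simp only at h
  by_cases hy : y = 0
  · subst hy
    simpa [pow_eq_zero_iff] using h
  · have hx : x ≠ 0 := by
      intro h0; subst h0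
      exact hy (by simpa [pow_eq_zero_iff, eq_comm] using h)
    have hu : x * y⁻¹ ≠ 0 := mul_ne_zero hx (inv_ne_zero hy)
    have hu3 : (x * y⁻¹) ^ 3 = 1 := by
      rw [mul_pow, h]
      field_simp
    have h1 : orderOf (x * y⁻¹) ∣ 3 := orderOf_dvd_of_pow_eq_one hu3
    have h2 : orderOf (x * y⁻¹) ∣ (p - 1) :=
      orderOf_dvd_of_pow_eq_one (ZMod.pow_card_sub_one_eq_one hu)
    have hnd : ¬ (3 ∣ (p - 1)) := by omega
    have hg : Nat.gcd 3 (p - 1) = 1 :=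
      (Nat.prime_three.coprime_iff_not_dvd).mpr hnd
    have : orderOf (x * y⁻¹) = 1 := Nat.eq_one_of_dvd_one (hg ▸ Nat.dvd_gcd h1 h2)
    have : x * y⁻¹ = 1 := orderOf_eq_one_iff.mp this
    field_simp at this
    exact this
end Aux
section Aux2
variable {p : ℕ} [Fact p.Prime]

lemma aux_sq_mul {l x : ZMod p} (hl : l ≠ 0) :
    quadraticChar (ZMod p) (l ^ 2 * x) = quadraticChar (ZMod p) x := by
  rw [map_mul, quadraticChar_sq_one' hl, one_mul]

lemma aux_two_point (hp : 3 < p) (a b : ZMod p) :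
    ∑ l : ZMod p, quadraticChar (ZMod p) ((l + a) * (l + b)) =
      if a = b then (p : ℤ) - 1 else -1 := by
  have hF : ringChar (ZMod p) ≠ 2 := aux_char_ne_two hp
  have hshift : ∑ l : ZMod p, quadraticChar (ZMod p) ((l + a) * (l + b))
      = ∑ l : ZMod p, quadraticChar (ZMod p) (l * (l + (b - a))) := by
    have := aux_sum_reindex_affine
      (fun t => (quadraticChar (ZMod p) (t * (t + (b - a))) : ℤ)) (one_ne_zero) a
    rw [← this]
    apply Finset.sum_congr rfl
    intro l _
    congr 1
    ring
  rw [hshift]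
  by_cases hab : a = b
  · subst hab
    simp only [sub_self, add_zero, if_pos rfl]
    have hterm : ∀ l : ZMod p, (quadraticChar (ZMod p) (l * l) : ℤ)
        = if l = 0 then 0 else 1 := by
      intro l
      by_cases hl : l = 0
      · simp [hl]
      · rw [← sq, quadraticChar_sq_one' hl, if_neg hl]
    rw [Finset.sum_congr rfl fun l _ => hterm l]
    rw [Finset.sum_ite, Finset.sum_const, Finset.sum_const]
    simp only [Finset.filter_ne', Finset.filter_eq', Finset.mem_univ, if_true,
      Finset.card_singleton, Finset.card_erase_of_mem, Finset.card_univ, ZMod.card,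
      nsmul_eq_mul, smul_eq_mul, mul_zero, mul_one, zero_add]
    omega
  · rw [if_neg hab]
    set d := b - a with hd
    have hdne : d ≠ 0 := sub_ne_zero.mpr (Ne.symm hab)
    have h0 : ∑ l : ZMod p, (quadraticChar (ZMod p) (l * (l + d)) : ℤ)
        = ∑ l ∈ Finset.univ.erase (0 : ZMod p), quadraticChar (ZMod p) (l * (l + d)) := by
      rw [Finset.sum_erase _ (by simp)]
    rw [h0]
    have h1 : ∑ l ∈ Finset.univ.erase (0 : ZMod p),
        (quadraticChar (ZMod p) (l * (l + d)) : ℤ)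
        = ∑ t ∈ Finset.univ.erase (1 : ZMod p), quadraticChar (ZMod p) t := by
      refine Finset.sum_nbij' (fun l => 1 + d * l⁻¹) (fun t => d * (t - 1)⁻¹) ?_ ?_ ?_ ?_ ?_
      · intro l hl
        have hl0 : l ≠ 0 := by simpa using hl
        simp only [Finset.mem_erase, Finset.mem_univ, and_true]
        intro h
        have : d * l⁻¹ = 0 := by linear_combination h
        exact hdne ((mul_eq_zero.mp this).resolve_right (inv_ne_zero hl0))
      · intro t ht
        have ht1 : t ≠ 1 := by simpa using ht
        simp only [Finset.mem_erase, Finset.mem_univ, and_true]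
        exact mul_ne_zero hdne (inv_ne_zero (sub_ne_zero.mpr ht1))
      · intro l hl
        have hl0 : l ≠ 0 := by simpa using hl
        field_simp
        simp [hdne]
      · intro t ht
        have ht1 : t ≠ 1 := by simpa using ht
        have : t - 1 ≠ 0 := sub_ne_zero.mpr ht1
        field_simp
        ring
      · intro l hl
        have hl0 : l ≠ 0 := by simpa using hl
        have key : l * (l + d) = l ^ 2 * (1 + d * l⁻¹) := by
          field_simp
        rw [key, aux_sq_mul hl0]
    rw [h1, Finset.sum_erase_eq_sub (Finset.mem_univ _)]
    rw [quadraticChar_sum_zero hF]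
    simp

lemma aux_sqrt_count (hp : 3 < p) (D : ZMod p) :
    ∑ z : ZMod p, (if z ^ 2 = D then (1 : ℤ) else 0)
      = quadraticChar (ZMod p) D + 1 := by
  have h := quadraticChar_card_sqrts (aux_char_ne_two hp) D
  rw [← h]
  rw [Finset.sum_boole]
  congr 1
  rw [Set.toFinset_setOf]
end Aux2
section Aux3
variable {p : ℕ} [Fact p.Prime]

lemma aux_two_ne_zero (hp : 3 < p) : (2 : ZMod p) ≠ 0 := by
  have : ((2 : ℕ) : ZMod p) ≠ 0 := by
    rw [Ne, ZMod.natCast_eq_zero_iff]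
    intro h
    have := Nat.le_of_dvd (by norm_num) h
    omega
  simpa using this

lemma aux_four_ne_zero (hp : 3 < p) : (4 : ZMod p) ≠ 0 := by
  have h2 := aux_two_ne_zero (p := p) hp
  have : (4 : ZMod p) = 2 * 2 := by norm_num
  rw [this]
  exact mul_ne_zero h2 h2

lemma aux_quad_count (hp : 3 < p) {x c : ZMod p} (hx : x ≠ 0) :
    ∑ y : ZMod p, (if x ^ 2 * y ^ 2 - c * y - c * x = 0 then (1 : ℤ) else 0)
      = quadraticChar (ZMod p) (c ^ 2 + 4 * c * x ^ 3) + 1 := by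
  have h2 : (2 : ZMod p) ≠ 0 := aux_two_ne_zero hp
  have h4 : (4 : ZMod p) ≠ 0 := aux_four_ne_zero hp
  have ha : (2 * x ^ 2 : ZMod p) ≠ 0 := mul_ne_zero h2 (pow_ne_zero _ hx)
  have key : ∀ y : ZMod p,
      (x ^ 2 * y ^ 2 - c * y - c * x = 0) ↔ ((2 * x ^ 2 * y + -c) ^ 2 = c ^ 2 + 4 * c * x ^ 3) := by
    intro y
    have hineq : (2 * x ^ 2 * y + -c) ^ 2 - (c ^ 2 + 4 * c * x ^ 3)
        = 4 * x ^ 2 * (x ^ 2 * y ^ 2 - c * y - c * x) := by ring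
    constructor
    · intro h
      have := hineq
      rw [h, mul_zero, sub_eq_zero] at this
      exact this
    · intro h
      rw [h, sub_self] at hineq
      have h4x : (4 * x ^ 2 : ZMod p) ≠ 0 := mul_ne_zero h4 (pow_ne_zero _ hx)
      exact (mul_eq_zero.mp hineq.symm).resolve_left h4x
  have hcong : ∑ y : ZMod p, (if x ^ 2 * y ^ 2 - c * y - c * x = 0 then (1 : ℤ) else 0)
      = ∑ y : ZMod p, (if (2 * x ^ 2 * y + -c) ^ 2 = c ^ 2 + 4 * c * x ^ 3 then (1 : ℤ) else 0) := by
    apply Finset.sum_congr rfl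
    intro y _
    exact if_congr (key y) rfl rfl
  rw [hcong,
    aux_sum_reindex_affine (fun z => if z ^ 2 = c ^ 2 + 4 * c * x ^ 3 then (1 : ℤ) else 0) ha (-c),
    aux_sqrt_count hp]

lemma aux_cube_reindex (hp : 3 < p) (hp3 : p % 3 = 2) (g : ZMod p → ℤ) :
    ∑ x : ZMod p, g (x ^ 3) = ∑ u : ZMod p, g u :=
  Fintype.sum_bijective _ (aux_cube_bij hp hp3) _ _ (fun _ => rfl)

end Aux3
section Aux4
variable {p : ℕ} [Fact p.Prime]

lemma aux_moment1 (hp : 3 < p) (c : ZMod p) :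
    ∑ l : ZMod p, ∑ x : ZMod p, (quadraticChar (ZMod p) (x ^ 3 + l * x ^ 2 + c) : ℤ)
      = p * quadraticChar (ZMod p) c := by
  rw [Finset.sum_comm]
  have hterm : ∀ x : ZMod p,
      ∑ l : ZMod p, (quadraticChar (ZMod p) (x ^ 3 + l * x ^ 2 + c) : ℤ)
        = if x = 0 then (p : ℤ) * quadraticChar (ZMod p) c else 0 := by
    intro x
    by_cases hx : x = 0
    · subst hx
      simp [Finset.sum_const, ZMod.card, mul_comm]
    · rw [if_neg hx]
      have hx2 : (x ^ 2 : ZMod p) ≠ 0 := pow_ne_zero _ hx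
      have : ∑ l : ZMod p, (quadraticChar (ZMod p) (x ^ 3 + l * x ^ 2 + c) : ℤ)
          = ∑ l : ZMod p, (quadraticChar (ZMod p) (x ^ 2 * l + (x ^ 3 + c)) : ℤ) := by
        apply Finset.sum_congr rfl; intro l _; congr 1; ring
      rw [this, aux_sum_reindex_affine (fun z => (quadraticChar (ZMod p) z : ℤ)) hx2]
      exact quadraticChar_sum_zero (aux_char_ne_two hp)
  rw [Finset.sum_congr rfl fun x _ => hterm x, Finset.sum_ite_eq' Finset.univ 0]
  simp
end Aux4
section Aux5
variable {p : ℕ} [Fact p.Prime]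

lemma aux_T (hp : 3 < p) (c : ZMod p) {x y : ZMod p} (hx : x ≠ 0) (hy : y ≠ 0) :
    ∑ l : ZMod p,
      (quadraticChar (ZMod p) ((x ^ 3 + l * x ^ 2 + c) * (y ^ 3 + l * y ^ 2 + c)) : ℤ)
    = if x + c * (x⁻¹) ^ 2 = y + c * (y⁻¹) ^ 2 then (p : ℤ) - 1 else -1 := by
  have hxy : (x * y : ZMod p) ≠ 0 := mul_ne_zero hx hy
  have hfac : ∀ l : ZMod p,
      (x ^ 3 + l * x ^ 2 + c) * (y ^ 3 + l * y ^ 2 + c)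
        = (x * y) ^ 2 * ((l + (x + c * (x⁻¹) ^ 2)) * (l + (y + c * (y⁻¹) ^ 2))) := by
    intro l
    field_simp
    ring
  calc ∑ l : ZMod p,
      (quadraticChar (ZMod p) ((x ^ 3 + l * x ^ 2 + c) * (y ^ 3 + l * y ^ 2 + c)) : ℤ)
      = ∑ l : ZMod p, (quadraticChar (ZMod p)
          ((l + (x + c * (x⁻¹) ^ 2)) * (l + (y + c * (y⁻¹) ^ 2))) : ℤ) := by
        apply Finset.sum_congr rfl
        intro l _
        rw [hfac l, aux_sq_mul hxy]
    _ = _ := aux_two_point hp _ _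

lemma aux_T0 (hp : 3 < p) (c : ZMod p) {y : ZMod p} (hy : y ≠ 0) :
    ∑ l : ZMod p, (quadraticChar (ZMod p) (c * (y ^ 3 + l * y ^ 2 + c)) : ℤ) = 0 := by
  have hy2 : (y ^ 2 : ZMod p) ≠ 0 := pow_ne_zero _ hy
  have h : ∑ l : ZMod p, (quadraticChar (ZMod p) (c * (y ^ 3 + l * y ^ 2 + c)) : ℤ)
      = ∑ l : ZMod p, (quadraticChar (ZMod p) c : ℤ) *
          quadraticChar (ZMod p) (y ^ 2 * l + (y ^ 3 + c)) := by
    apply Finset.sum_congr rfl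
    intro l _
    rw [← map_mul]
    congr 1
    ring
  rw [h, ← Finset.mul_sum,
    aux_sum_reindex_affine (fun z => (quadraticChar (ZMod p) z : ℤ)) hy2,
    quadraticChar_sum_zero (aux_char_ne_two hp), mul_zero]

lemma aux_I (hp : 3 < p) {c x : ZMod p} (hc : c ≠ 0) (hx : x ≠ 0) :
    ∑ y ∈ Finset.univ.erase (0 : ZMod p),
        (if x + c * (x⁻¹) ^ 2 = y + c * (y⁻¹) ^ 2 then (1 : ℤ) else 0)
      = 2 + quadraticChar (ZMod p) (c ^ 2 + 4 * c * x ^ 3)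
          - (if x ^ 3 = 2 * c then 1 else 0) := by
  have hiff : ∀ y : ZMod p, y ≠ 0 →
      ((x + c * (x⁻¹) ^ 2 = y + c * (y⁻¹) ^ 2) ↔
        (y = x ∨ x ^ 2 * y ^ 2 - c * y - c * x = 0)) := by
    intro y hy
    have hx2y2 : (x ^ 2 * y ^ 2 : ZMod p) ≠ 0 :=
      mul_ne_zero (pow_ne_zero _ hx) (pow_ne_zero _ hy)
    have key : (x - y) * (x ^ 2 * y ^ 2 - c * y - c * x)
        = x ^ 2 * y ^ 2 * ((x + c * (x⁻¹) ^ 2) - (y + c * (y⁻¹) ^ 2)) := by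
      field_simp
      ring
    constructor
    · intro h
      rw [h, sub_self, mul_zero] at key
      rcases mul_eq_zero.mp key with h' | h'
      · exact Or.inl (sub_eq_zero.mp h').symm
      · exact Or.inr h'
    · intro h
      rcases h with h | h
      · rw [h]
      · rw [h, mul_zero] at key
        have := (mul_eq_zero.mp key.symm).resolve_left hx2y2
        exact sub_eq_zero.mp this
  have hstep1 : ∑ y ∈ Finset.univ.erase (0 : ZMod p),
      (if x + c * (x⁻¹) ^ 2 = y + c * (y⁻¹) ^ 2 then (1 : ℤ) else 0)
      = ∑ y ∈ Finset.univ.erase (0 : ZMod p),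
        (if (y = x ∨ x ^ 2 * y ^ 2 - c * y - c * x = 0) then (1 : ℤ) else 0) := by
    apply Finset.sum_congr rfl
    intro y hy
    exact if_congr (hiff y (by simpa using hy)) rfl rfl
  have h0term : (if ((0 : ZMod p) = x ∨ x ^ 2 * 0 ^ 2 - c * 0 - c * x = 0) then (1 : ℤ) else 0)
      = 0 := by
    rw [if_neg]
    rintro (h | h)
    · exact hx h.symm
    · apply mul_ne_zero hc hx
      linear_combination -h
  have hstep2 : ∑ y ∈ Finset.univ.erase (0 : ZMod p),
      (if (y = x ∨ x ^ 2 * y ^ 2 - c * y - c * x = 0) then (1 : ℤ) else 0)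
      = ∑ y : ZMod p,
        (if (y = x ∨ x ^ 2 * y ^ 2 - c * y - c * x = 0) then (1 : ℤ) else 0) :=
    Finset.sum_erase _ h0term
  have hsplit : ∀ y : ZMod p,
      (if (y = x ∨ x ^ 2 * y ^ 2 - c * y - c * x = 0) then (1 : ℤ) else 0)
      = (if y = x then (1 : ℤ) else 0) + (if x ^ 2 * y ^ 2 - c * y - c * x = 0 then (1 : ℤ) else 0)
        - (if y = x then (1 : ℤ) else 0) * (if x ^ 2 * y ^ 2 - c * y - c * x = 0 then (1 : ℤ) else 0) := by
    intro y
    by_cases h1 : y = x <;> by_cases h2 : x ^ 2 * y ^ 2 - c * y - c * x = 0 <;>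
      simp [h1, h2]
  have hsum1 : ∑ y : ZMod p, (if y = x then (1 : ℤ) else 0) = 1 := by
    rw [Finset.sum_ite_eq' Finset.univ x (fun _ => (1 : ℤ))]
    simp
  have hsum3 : ∑ y : ZMod p,
      (if y = x then (1 : ℤ) else 0) * (if x ^ 2 * y ^ 2 - c * y - c * x = 0 then (1 : ℤ) else 0)
      = if x ^ 3 = 2 * c then 1 else 0 := by
    have : ∀ y : ZMod p, (if y = x then (1 : ℤ) else 0) *
        (if x ^ 2 * y ^ 2 - c * y - c * x = 0 then (1 : ℤ) else 0)
        = if y = x then (if x ^ 2 * y ^ 2 - c * y - c * x = 0 then (1 : ℤ) else 0) else 0 := by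
      intro y
      by_cases h1 : y = x <;> simp [h1]
    rw [Finset.sum_congr rfl fun y _ => this y,
      Finset.sum_ite_eq' Finset.univ x (fun y => if x ^ 2 * y ^ 2 - c * y - c * x = 0 then (1 : ℤ) else 0)]
    simp only [Finset.mem_univ, if_true]
    apply if_congr _ rfl rfl
    constructor
    · intro h
      have hfac : x * (x ^ 3 - 2 * c) = 0 := by linear_combination h
      have := (mul_eq_zero.mp hfac).resolve_left hx
      linear_combination this
    · intro h
      linear_combination x * h
  rw [hstep1, hstep2, Finset.sum_congr rfl fun y _ => hsplit y]
  rw [Finset.sum_sub_distrib, Finset.sum_add_distrib, hsum1, hsum3, aux_quad_count hp hx]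
  ring
end Aux5
section Aux6
variable {p : ℕ} [Fact p.Prime]

lemma aux_K3 (hp : 3 < p) (hp3 : p % 3 = 2) {c : ZMod p} (hc : c ≠ 0) :
    ∑ x ∈ Finset.univ.erase (0 : ZMod p),
      (quadraticChar (ZMod p) (c ^ 2 + 4 * c * x ^ 3) : ℤ) = -1 := by
  rw [Finset.sum_erase_eq_sub (Finset.mem_univ _)]
  have h1 : ∑ x : ZMod p, (quadraticChar (ZMod p) (c ^ 2 + 4 * c * x ^ 3) : ℤ)
      = ∑ u : ZMod p, (quadraticChar (ZMod p) (c ^ 2 + 4 * c * u) : ℤ) :=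
    aux_cube_reindex hp hp3 (fun u => (quadraticChar (ZMod p) (c ^ 2 + 4 * c * u) : ℤ))
  have h2 : ∑ u : ZMod p, (quadraticChar (ZMod p) (c ^ 2 + 4 * c * u) : ℤ)
      = ∑ u : ZMod p, (quadraticChar (ZMod p) ((4 * c) * u + c ^ 2) : ℤ) := by
    apply Finset.sum_congr rfl; intro u _; congr 1; ring
  have h4c : (4 * c : ZMod p) ≠ 0 := mul_ne_zero (aux_four_ne_zero hp) hc
  have h3 : ∑ u : ZMod p, (quadraticChar (ZMod p) ((4 * c) * u + c ^ 2) : ℤ) = 0 := by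
    rw [aux_sum_reindex_affine (fun z => (quadraticChar (ZMod p) z : ℤ)) h4c]
    exact quadraticChar_sum_zero (aux_char_ne_two hp)
  have h0 : (quadraticChar (ZMod p) (c ^ 2 + 4 * c * 0 ^ 3) : ℤ) = 1 := by
    have : (c ^ 2 + 4 * c * 0 ^ 3 : ZMod p) = c ^ 2 := by ring
    rw [this, quadraticChar_sq_one' hc]
  rw [h1, h2, h3, h0]
  ring

lemma aux_K4 (hp : 3 < p) (hp3 : p % 3 = 2) {c : ZMod p} (hc : c ≠ 0) :
    ∑ x ∈ Finset.univ.erase (0 : ZMod p),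
      (if x ^ 3 = 2 * c then (1 : ℤ) else 0) = 1 := by
  rw [Finset.sum_erase_eq_sub (Finset.mem_univ _)]
  have h1 : ∑ x : ZMod p, (if x ^ 3 = 2 * c then (1 : ℤ) else 0)
      = ∑ u : ZMod p, (if u = 2 * c then (1 : ℤ) else 0) :=
    aux_cube_reindex hp hp3 (fun u => if u = 2 * c then (1 : ℤ) else 0)
  have h2 : ∑ u : ZMod p, (if u = 2 * c then (1 : ℤ) else 0) = 1 := by
    rw [Finset.sum_ite_eq' Finset.univ (2 * c) (fun _ => (1 : ℤ))]
    simp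
  have h0 : (if (0 : ZMod p) ^ 3 = 2 * c then (1 : ℤ) else 0) = 0 := by
    rw [if_neg]
    intro h
    exact mul_ne_zero (aux_two_ne_zero hp) hc (by linear_combination -h)
  rw [h1, h2, h0, sub_zero]

lemma aux_moment2 (hp : 3 < p) (hp3 : p % 3 = 2) {c : ZMod p} (hc : c ≠ 0) :
    ∑ l : ZMod p, (∑ x : ZMod p, (quadraticChar (ZMod p) (x ^ 3 + l * x ^ 2 + c) : ℤ)) ^ 2
      = (p : ℤ) ^ 2 - p - 1 := by
  have hcard : (Finset.univ.erase (0 : ZMod p)).card = p - 1 := by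
    rw [Finset.card_erase_of_mem (Finset.mem_univ _), Finset.card_univ, ZMod.card]
  have hexp : ∑ l : ZMod p,
        (∑ x : ZMod p, (quadraticChar (ZMod p) (x ^ 3 + l * x ^ 2 + c) : ℤ)) ^ 2
      = ∑ x : ZMod p, ∑ y : ZMod p, ∑ l : ZMod p,
          (quadraticChar (ZMod p) ((x ^ 3 + l * x ^ 2 + c) * (y ^ 3 + l * y ^ 2 + c)) : ℤ) := by
    have h1 : ∀ l : ZMod p,
        (∑ x : ZMod p, (quadraticChar (ZMod p) (x ^ 3 + l * x ^ 2 + c) : ℤ)) ^ 2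
        = ∑ x : ZMod p, ∑ y : ZMod p,
            (quadraticChar (ZMod p) ((x ^ 3 + l * x ^ 2 + c) * (y ^ 3 + l * y ^ 2 + c)) : ℤ) := by
      intro l
      rw [sq, Finset.sum_mul_sum]
      exact Finset.sum_congr rfl fun x _ => Finset.sum_congr rfl fun y _ => (map_mul _ _ _).symm
    rw [Finset.sum_congr rfl fun l _ => h1 l, Finset.sum_comm]
    exact Finset.sum_congr rfl fun x _ => Finset.sum_comm
  rw [hexp]
  -- inner sums over y, for fixed x
  have hF0 : ∑ y : ZMod p, ∑ l : ZMod p,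
      (quadraticChar (ZMod p) (((0 : ZMod p) ^ 3 + l * 0 ^ 2 + c) * (y ^ 3 + l * y ^ 2 + c)) : ℤ)
      = p := by
    rw [← Finset.sum_erase_add _ _ (Finset.mem_univ (0 : ZMod p))]
    have hz : ∀ y ∈ Finset.univ.erase (0 : ZMod p), ∑ l : ZMod p,
        (quadraticChar (ZMod p) (((0 : ZMod p) ^ 3 + l * 0 ^ 2 + c) * (y ^ 3 + l * y ^ 2 + c)) : ℤ)
        = 0 := by
      intro y hy
      have hy0 : y ≠ 0 := by simpa using hy
      rw [← aux_T0 hp c hy0]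
      apply Finset.sum_congr rfl
      intro l _
      congr 1
      ring
    rw [Finset.sum_congr rfl hz, Finset.sum_const_zero, zero_add]
    have hdiag : ∀ l : ZMod p,
        (quadraticChar (ZMod p)
          (((0 : ZMod p) ^ 3 + l * 0 ^ 2 + c) * ((0 : ZMod p) ^ 3 + l * 0 ^ 2 + c)) : ℤ) = 1 := by
      intro l
      have : (((0 : ZMod p) ^ 3 + l * 0 ^ 2 + c) * ((0 : ZMod p) ^ 3 + l * 0 ^ 2 + c)) = c ^ 2 := by
        ring
      rw [this, quadraticChar_sq_one' hc]
    rw [Finset.sum_congr rfl fun l _ => hdiag l, Finset.sum_const, Finset.card_univ, ZMod.card,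
      nsmul_eq_mul, mul_one]
  have hFx : ∀ x : ZMod p, x ≠ 0 → ∑ y : ZMod p, ∑ l : ZMod p,
      (quadraticChar (ZMod p) ((x ^ 3 + l * x ^ 2 + c) * (y ^ 3 + l * y ^ 2 + c)) : ℤ)
      = (p : ℤ) * (2 + quadraticChar (ZMod p) (c ^ 2 + 4 * c * x ^ 3)
          - (if x ^ 3 = 2 * c then 1 else 0)) - ((p : ℤ) - 1) := by
    intro x hx
    rw [← Finset.sum_erase_add _ _ (Finset.mem_univ (0 : ZMod p))]
    have hy0 : ∑ l : ZMod p,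
        (quadraticChar (ZMod p)
          ((x ^ 3 + l * x ^ 2 + c) * ((0 : ZMod p) ^ 3 + l * 0 ^ 2 + c)) : ℤ) = 0 := by
      rw [← aux_T0 hp c hx]
      apply Finset.sum_congr rfl
      intro l _
      congr 1
      ring
    rw [hy0, add_zero]
    have hz : ∀ y ∈ Finset.univ.erase (0 : ZMod p), ∑ l : ZMod p,
        (quadraticChar (ZMod p) ((x ^ 3 + l * x ^ 2 + c) * (y ^ 3 + l * y ^ 2 + c)) : ℤ)
        = (p : ℤ) * (if x + c * (x⁻¹) ^ 2 = y + c * (y⁻¹) ^ 2 then (1 : ℤ) else 0) - 1 := by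
      intro y hy
      have hy0 : y ≠ 0 := by simpa using hy
      rw [aux_T hp c hx hy0]
      by_cases h : x + c * (x⁻¹) ^ 2 = y + c * (y⁻¹) ^ 2
      · rw [if_pos h, if_pos h]; ring
      · rw [if_neg h, if_neg h]; ring
    rw [Finset.sum_congr rfl hz, Finset.sum_sub_distrib, ← Finset.mul_sum, aux_I hp hc hx,
      Finset.sum_const, hcard, nsmul_eq_mul, mul_one]
    have : ((p - 1 : ℕ) : ℤ) = (p : ℤ) - 1 := by
      have : 1 ≤ p := by omega
      push_cast [this]
      ring
    rw [this]
  rw [← Finset.sum_erase_add _ _ (Finset.mem_univ (0 : ZMod p)), hF0,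
    Finset.sum_congr rfl (fun x hx => hFx x (by simpa using hx))]
  rw [Finset.sum_sub_distrib, ← Finset.mul_sum, Finset.sum_const, hcard, nsmul_eq_mul]
  have hsplit : ∑ x ∈ Finset.univ.erase (0 : ZMod p),
      (2 + quadraticChar (ZMod p) (c ^ 2 + 4 * c * x ^ 3)
        - (if x ^ 3 = 2 * c then (1 : ℤ) else 0))
      = 2 * ((p : ℤ) - 1) + (-1) - 1 := by
    rw [Finset.sum_sub_distrib, Finset.sum_add_distrib, aux_K3 hp hp3 hc, aux_K4 hp hp3 hc,
      Finset.sum_const, hcard, nsmul_eq_mul]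
    have : ((p - 1 : ℕ) : ℤ) = (p : ℤ) - 1 := by omega
    rw [this]
    ring
  rw [hsplit]
  have : ((p - 1 : ℕ) : ℤ) = (p : ℤ) - 1 := by omega
  rw [this]
  ring
end Aux6
theorem stmt17 (p : ℕ) [Fact p.Prime] (hp : 3 < p) (hp3 : p % 3 = 2)
    (c : ZMod p) (hc : c ≠ 0) :
    ((((∑ l : ZMod p, (∑ x : ZMod p, quadraticChar (ZMod p) (x ^ 3 + l * x ^ 2 + c)) ^ 2) : ℤ) : ℚ) / p) -
      ((((∑ l : ZMod p, ∑ x : ZMod p, quadraticChar (ZMod p) (x ^ 3 + l * x ^ 2 + c)) : ℤ) : ℚ) / p) ^ 2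
      = p - 2 - 1 / p := by
  rw [aux_moment2 hp hp3 hc, aux_moment1 hp c]
  have hp0 : (p : ℚ) ≠ 0 := by
    have : 0 < p := by omega
    exact_mod_cast this.ne'
  set q : ℤ := quadraticChar (ZMod p) c with hq
  have hχ : ((q : ℚ)) ^ 2 = 1 := by
    have := quadraticChar_sq_one hc
    rw [hq]
    exact_mod_cast this
  push_cast
  field_simp
  linear_combination (-(p : ℚ)) * hχ
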